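/- arXiv:2008.05364 — 2 statements merged into one kernel-verified Lean document; each statement's English description precedes it below -/
import Mathlib

section
/- Let N be an even positive integer, x ∈ Π[N] a real-valued signal, and K ∈ ℤ such that x is symmetric about K, i.e. x[K+j] = x[K−j] for all j ∈ ℤ. Then h = H(x) is antisymmetric about K, i.e. h[K+j] = −h[K−j] for all j ∈ ℤ; in particular h[K] = 0. -/
open MeasureTheory

namespace WP

/-- The root of unity ω = e^{2πi/N}. -/
noncomputable def ww (N : ℕ) : ℂ := Complex.exp (2 * Real.pi * Complex.I / N)

/-- DFT of a signal `x ∈ Π[N]`: x̂[n] = Σ_{k=0}^{N−1} ω^{−kn} x[k]. -/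
noncomputable def dft (N : ℕ) (x : ℤ → ℂ) (n : ℤ) : ℂ :=
  ∑ k ∈ Finset.range N, ww N ^ (-((k : ℤ) * n)) * x k

/-- Inner product on `Π[N]`. -/
noncomputable def inner1 (N : ℕ) (x y : ℤ → ℂ) : ℂ :=
  ∑ k ∈ Finset.range N, x k * (starRingEnd ℂ) (y k)

/-- The discrete periodic Hilbert transform, defined via the DFT:
    Ĥ(x)[n] = −i·x̂[n] for 0<n<N/2, i·x̂[n] for N/2<n<N, 0 at n=0 and n=N/2. -/
noncomputable def hilbertT (N : ℕ) (x : ℤ → ℂ) (k : ℤ) : ℂ :=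
  (N : ℂ)⁻¹ * ∑ n ∈ Finset.range N,
    (if 0 < n ∧ n < N / 2 then -Complex.I else if N / 2 < n ∧ n < N then Complex.I else 0) *
      dft N x n * ww N ^ ((k * (n : ℤ)))

/-- The complementary-WP operator `C`, defined via the DFT:
    Ĉ(x)[n] = −i·x̂[n] for 0<n<N/2, i·x̂[n] for N/2<n<N, x̂[0] at 0, x̂[N/2] at N/2. -/
noncomputable def cwpT (N : ℕ) (x : ℤ → ℂ) (k : ℤ) : ℂ :=
  (N : ℂ)⁻¹ * ∑ n ∈ Finset.range N,
    (if n = 0 ∨ n = N / 2 then 1 else if n < N / 2 then -Complex.I else Complex.I) *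
      dft N x n * ww N ^ ((k * (n : ℤ)))

/-- The order-p B-spline b^p(t). -/
noncomputable def bspline (p : ℕ) (t : ℝ) : ℝ :=
  (1 / (Nat.factorial (p - 1) : ℝ)) *
    ∑ k ∈ Finset.range (p + 1),
      (-1 : ℝ) ^ k * (p.choose k : ℝ) * max (t + (p : ℝ) / 2 - (k : ℝ)) 0 ^ (p - 1)

/-- u^p[n] = Σ_{k=−N/2}^{N/2−1} ω^{−kn} b^p(k). -/
noncomputable def uSeq (N p : ℕ) (n : ℤ) : ℂ :=
  ∑ k ∈ Finset.range N,
    ww N ^ (-(((k : ℤ) - (N : ℤ) / 2) * n)) * (bspline p ((k : ℝ) - (N : ℝ) / 2) : ℂ)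

/-- v^p[n] = e^{−πin/N} Σ_{k=−N/2}^{N/2−1} ω^{−kn} b^p(k+1/2). -/
noncomputable def vSeq (N p : ℕ) (n : ℤ) : ℂ :=
  Complex.exp (-Real.pi * Complex.I * n / N) *
    ∑ k ∈ Finset.range N,
      ww N ^ (-(((k : ℤ) - (N : ℤ) / 2) * n)) *
        (bspline p ((k : ℝ) - (N : ℝ) / 2 + 1 / 2) : ℂ)

/-- The span-two discrete-time B-spline b_{[1]}^p ∈ Π[N]:
    the N-periodic signal with b_{[1]}^p[k] = b^p(k/2)/2 for −N/2 ≤ k ≤ N/2−1. -/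
noncomputable def bs1 (N p : ℕ) (k : ℤ) : ℂ :=
  ((bspline p ((((k + (N : ℤ) / 2) % (N : ℤ) - (N : ℤ) / 2 : ℤ) : ℝ) / 2) : ℝ) : ℂ) / 2

/-- Its DFT b̂_{[1]}^p[n] = Σ_{k=−N/2}^{N/2−1} ω^{−kn} b_{[1]}^p[k]. -/
noncomputable def bhat1 (N p : ℕ) (n : ℤ) : ℂ :=
  ∑ k ∈ Finset.range N,
    ww N ^ (-(((k : ℤ) - (N : ℤ) / 2) * n)) * bs1 N p ((k : ℤ) - (N : ℤ) / 2)

/-- Υ^p[n] = (u^p[2n]² + v^p[2n]²)/4. -/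
noncomputable def upsilon (N p : ℕ) (n : ℤ) : ℂ :=
  (uSeq N p (2 * n) ^ 2 + vSeq N p (2 * n) ^ 2) / 4

/-- β[n] = b̂_{[1]}^p[n] / √(Υ^p[n]). -/
noncomputable def betaS (N p : ℕ) (n : ℤ) : ℂ := bhat1 N p n / upsilon N p n ^ ((1 : ℂ) / 2)

/-- α[n] = ω^n · β[n+N/2]. -/
noncomputable def alphaS (N p : ℕ) (n : ℤ) : ℂ := ww N ^ n * betaS N p (n + (N : ℤ) / 2)

/-- The first-level wavelet packets ψ_{[1],λ}^p, λ = 0,1, defined via their DFTs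
    ψ̂_{[1],0}^p[n] = β[n] and ψ̂_{[1],1}^p[n] = α[n]. -/
noncomputable def psi1 (N p lam : ℕ) (k : ℤ) : ℂ :=
  (N : ℂ)⁻¹ * ∑ n ∈ Finset.range N,
    (if lam = 0 then betaS N p n else alphaS N p n) * ww N ^ ((k * (n : ℤ)))


lemma ww_ne_zero (N : ℕ) : ww N ≠ 0 := Complex.exp_ne_zero _

lemma ww_pow_N (N : ℕ) (hN : 0 < N) : ww N ^ (N:ℤ) = 1 := by
  rw [zpow_natCast, ww, ← Complex.exp_nat_mul]
  rw [show (N:ℂ) * (2 * Real.pi * Complex.I / N) = 2 * Real.pi * Complex.I by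
    have : (N:ℂ) ≠ 0 := Nat.cast_ne_zero.mpr hN.ne'
    field_simp]
  exact Complex.exp_two_pi_mul_I

lemma ww_zpow_mod (N : ℕ) (hN : 0 < N) (a b : ℤ) (h : (N:ℤ) ∣ (a - b)) :
    ww N ^ a = ww N ^ b := by
  obtain ⟨m, hm⟩ := h
  have ha : a = b + (N:ℤ)*m := by linarith
  rw [ha, zpow_add₀ (ww_ne_zero N), zpow_mul, ww_pow_N N hN, one_zpow, mul_one]

lemma per_zsmul (N : ℕ) (x : ℤ → ℂ) (hper : ∀ k : ℤ, x (k + N) = x k)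
    (k q : ℤ) : x (k + q * N) = x k := by
  have hp : Function.Periodic x (N:ℤ) := hper
  simpa using (hp.int_mul q) k

lemma dft_reflect (N : ℕ) (hN : 0 < N) (x : ℤ → ℂ)
    (hper : ∀ k : ℤ, x (k + N) = x k) (K : ℤ)
    (hsym : ∀ j : ℤ, x (K + j) = x (K - j)) (n : ℤ) :
    dft N x ((N:ℤ) - n) = ww N ^ (2*K*n) * dft N x n := by
  have hNZ : (0:ℤ) < (N:ℤ) := by exact_mod_cast hN
  unfold dft
  rw [Finset.mul_sum]
  have step1 : ∀ k ∈ Finset.range N,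
      ww N ^ (-((k:ℤ) * ((N:ℤ) - n))) * x k = ww N ^ ((k:ℤ)*n) * x k := by
    intro k _
    congr 1
    apply ww_zpow_mod N hN
    exact ⟨-k, by ring⟩
  rw [Finset.sum_congr rfl step1]
  have key : ∀ k : ℕ, (((2*K - (k:ℤ)) % (N:ℤ)).toNat : ℤ) = (2*K - (k:ℤ)) % (N:ℤ) :=
    fun k => Int.toNat_of_nonneg (Int.emod_nonneg _ hNZ.ne')
  have inv : ∀ k : ℕ, k < N →
      ((2*K - ((((2*K - (k:ℤ)) % (N:ℤ)).toNat : ℤ))) % (N:ℤ)) = (k:ℤ) := by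
    intro k hk
    rw [key k]
    conv_lhs => rw [Int.sub_emod, Int.emod_emod_of_dvd _ dvd_rfl, ← Int.sub_emod]
    simp only [sub_sub_cancel]
    exact Int.emod_eq_of_lt (by positivity) (by exact_mod_cast hk)
  refine Finset.sum_nbij' (fun k => ((2*K - (k:ℤ)) % (N:ℤ)).toNat)
    (fun k => ((2*K - (k:ℤ)) % (N:ℤ)).toNat) ?_ ?_ ?_ ?_ ?_
  · intro k hk
    simp only [Finset.mem_range] at *
    have := Int.emod_lt_of_pos (2*K - (k:ℤ)) hNZ
    have := key k
    omega
  · intro k hk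
    simp only [Finset.mem_range] at *
    have := Int.emod_lt_of_pos (2*K - (k:ℤ)) hNZ
    have := key k
    omega
  · intro k hk
    simp only [Finset.mem_range] at hk
    have h1 := inv k hk
    have h2 := key ((((2*K - (k:ℤ)) % (N:ℤ)).toNat : ℕ))
    omega
  · intro k hk
    simp only [Finset.mem_range] at hk
    have h1 := inv k hk
    have h2 := key ((((2*K - (k:ℤ)) % (N:ℤ)).toNat : ℕ))
    omega
  · intro k hk
    simp only [Finset.mem_range] at hk
    have h1 := key k
    have hqe : (((2*K - (k:ℤ)) % (N:ℤ)).toNat : ℤ)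
        = (2*K - (k:ℤ)) + (-((2*K - (k:ℤ)) / (N:ℤ))) * (N:ℤ) := by
      rw [h1]
      have := Int.emod_add_mul_ediv (2*K - (k:ℤ)) (N:ℤ)
      linarith
    have hx : x ((((2*K - (k:ℤ)) % (N:ℤ)).toNat : ℤ)) = x k := by
      rw [hqe, per_zsmul N x hper, show 2*K - (k:ℤ) = K + (K - k) by ring,
        hsym (K - (k:ℤ))]
      congr 1; ring
    rw [hx]
    have hw : ww N ^ (-((((2*K - (k:ℤ)) % (N:ℤ)).toNat : ℤ) * n))
        = ww N ^ (-((2*K - (k:ℤ)) * n)) := by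
      apply ww_zpow_mod N hN
      rw [hqe]
      exact ⟨(2*K - (k:ℤ)) / (N:ℤ) * n, by ring⟩
    rw [hw, ← mul_assoc, ← zpow_add₀ (ww_ne_zero N)]
    congr 2
    ring

/-- If a real-valued N-periodic signal x is symmetric about K, then its
    discrete periodic Hilbert transform is antisymmetric about K, and H(x)[K] = 0. -/
theorem hilbert_antisymmetric (N : ℕ) (hN : 0 < N) (hNe : Even N) (x : ℤ → ℂ)
    (hper : ∀ k : ℤ, x (k + N) = x k) (hreal : ∀ k : ℤ, (x k).im = 0)
    (K : ℤ) (hsym : ∀ j : ℤ, x (K + j) = x (K - j)) :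
    (∀ j : ℤ, hilbertT N x (K + j) = -hilbertT N x (K - j)) ∧ hilbertT N x K = 0 := by
  have main : ∀ j : ℤ, hilbertT N x (K + j) = -hilbertT N x (K - j) := by
    intro j
    unfold hilbertT
    rw [← mul_neg, ← Finset.sum_neg_distrib]
    congr 1
    refine Finset.sum_nbij' (fun n => if n = 0 then 0 else N - n)
      (fun n => if n = 0 then 0 else N - n) ?_ ?_ ?_ ?_ ?_
    · intro n hn
      simp only [Finset.mem_range] at *
      split <;> omega
    · intro n hn
      simp only [Finset.mem_range] at *
      split <;> omega
    · intro n hn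
      simp only [Finset.mem_range] at hn
      split <;> split <;> omega
    · intro n hn
      simp only [Finset.mem_range] at hn
      split <;> split <;> omega
    · intro n hn
      simp only [Finset.mem_range] at hn
      by_cases hn0 : n = 0
      · subst hn0
        simp only [reduceIte]
        rw [if_neg (by omega), if_neg (by omega)]
        simp
      · simp only [if_neg hn0]
        obtain ⟨m, hm⟩ := hNe
        have hN2 : N / 2 = m := by omega
        have hcast : ((N - n : ℕ) : ℤ) = (N:ℤ) - (n:ℤ) := by
          have : n ≤ N := by omega
          push_cast [this]
          ring
        have hc : (if 0 < N - n ∧ N - n < N / 2 then -Complex.I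
              else if N / 2 < N - n ∧ N - n < N then Complex.I else 0)
            = -(if 0 < n ∧ n < N / 2 then -Complex.I
              else if N / 2 < n ∧ n < N then Complex.I else 0) := by
          rcases lt_trichotomy n m with h | h | h
          · rw [if_neg (by omega), if_pos (by omega), if_pos (by omega), neg_neg]
          · rw [if_neg (by omega), if_neg (by omega), if_neg (by omega),
              if_neg (by omega), neg_zero]
          · rw [if_pos (by omega), if_neg (by omega), if_pos (by omega)]
        rw [hcast, hc, dft_reflect N hN x hper K hsym (n:ℤ)]
        have hw : ww N ^ ((K - j) * ((N:ℤ) - (n:ℤ)))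
            = ww N ^ (-((K - j) * (n:ℤ))) := by
          apply ww_zpow_mod N hN
          exact ⟨K - j, by ring⟩
        rw [hw]
        have hz : ww N ^ ((K + j) * (n:ℤ))
            = ww N ^ (2*K*(n:ℤ)) * ww N ^ (-((K - j) * (n:ℤ))) := by
          rw [← zpow_add₀ (ww_ne_zero N)]
          congr 1
          ring
        rw [hz]
        ring
  refine ⟨main, ?_⟩
  have h0 := main 0
  simp only [add_zero, sub_zero] at h0
  linear_combination h0 / 2

end WP
end

section
/- Let N be an even positive integer and x ∈ Π[N] with x̂[0] = 0 and x̂[N/2] = 0. Then ‖H(x)‖ = ‖x‖. -/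
open MeasureTheory

namespace WP

lemma ww_zpow (N : ℕ) (m : ℤ) :
    ww N ^ m = Complex.exp (m * (2 * Real.pi * Complex.I / N)) := by
  rw [ww, ← Complex.exp_int_mul]

lemma ww_conj (N : ℕ) (m : ℤ) :
    (starRingEnd ℂ) (ww N ^ m) = ww N ^ (-m) := by
  rw [ww_zpow, ww_zpow, ← Complex.exp_conj]
  congr 1
  simp [map_mul, map_div₀, Complex.conj_I, map_ofNat]
  ring

lemma ww_pow_nat (N : ℕ) (hN : 0 < N) : ww N ^ (N : ℤ) = 1 := by
  rw [ww_zpow]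
  have hN0 : (N : ℂ) ≠ 0 := Nat.cast_ne_zero.mpr hN.ne'
  rw [show ((N:ℤ):ℂ) * (2 * Real.pi * Complex.I / N) = 2 * Real.pi * Complex.I by
    push_cast; field_simp]
  exact Complex.exp_two_pi_mul_I

lemma ww_eq_one_iff (N : ℕ) (hN : 0 < N) (d : ℤ) : ww N ^ d = 1 ↔ (N : ℤ) ∣ d := by
  have hN0 : (N : ℂ) ≠ 0 := Nat.cast_ne_zero.mpr hN.ne'
  have hπ : (2 : ℂ) * Real.pi * Complex.I ≠ 0 := by
    simp [Real.pi_ne_zero, Complex.I_ne_zero]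
  rw [ww_zpow, Complex.exp_eq_one_iff]
  constructor
  · rintro ⟨n, hn⟩
    refine ⟨n, ?_⟩
    have h1 : (d:ℂ) * (2*Real.pi*Complex.I) = (↑n * ↑N) * (2*Real.pi*Complex.I) := by
      field_simp at hn
      linear_combination (2*Real.pi*Complex.I) * hn
    have h2 := mul_right_cancel₀ hπ h1
    have h3 : d = n * N := by exact_mod_cast h2
    rw [h3]; ring
  · rintro ⟨c, rfl⟩
    exact ⟨c, by push_cast; field_simp⟩

lemma ortho (N : ℕ) (hN : 0 < N) (d : ℤ) :
    ∑ k ∈ Finset.range N, ww N ^ ((k : ℤ) * d) = if (N : ℤ) ∣ d then (N : ℂ) else 0 := by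
  have hrw : ∀ k ∈ Finset.range N, ww N ^ ((k:ℤ) * d) = (ww N ^ d) ^ k := by
    intro k _
    rw [← zpow_natCast (ww N ^ d) k, ← zpow_mul, mul_comm]
  rw [Finset.sum_congr rfl hrw]
  by_cases hd : (N : ℤ) ∣ d
  · rw [if_pos hd]
    have h1 : ww N ^ d = 1 := (ww_eq_one_iff N hN d).mpr hd
    simp [h1]
  · rw [if_neg hd]
    have hr : ww N ^ d ≠ 1 := fun h => hd ((ww_eq_one_iff N hN d).mp h)
    rw [geom_sum_eq hr]
    have h2 : (ww N ^ d) ^ N = 1 := by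
      rw [← zpow_natCast, ← zpow_mul, mul_comm, zpow_mul, ww_pow_nat N hN, one_zpow]
    simp [h2]

lemma dvd_iff_eq (N : ℕ) (n m : ℕ) (hn : n < N) (hm : m < N) :
    (N : ℤ) ∣ ((n : ℤ) - (m : ℤ)) ↔ n = m := by
  constructor
  · intro hd
    have := Int.eq_zero_of_abs_lt_dvd hd (by rw [abs_sub_lt_iff]; omega)
    omega
  · rintro rfl; simp

lemma sum_norm_inv (N : ℕ) (hN : 0 < N) (y : ℕ → ℂ) :
    ∑ k ∈ Finset.range N,
      ((N : ℂ)⁻¹ * ∑ n ∈ Finset.range N, y n * ww N ^ ((k : ℤ) * (n : ℤ))) *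
        (starRingEnd ℂ) ((N : ℂ)⁻¹ * ∑ n ∈ Finset.range N, y n * ww N ^ ((k : ℤ) * (n : ℤ)))
      = (N : ℂ)⁻¹ * ∑ n ∈ Finset.range N, y n * (starRingEnd ℂ) (y n) := by
  have hN0 : (N : ℂ) ≠ 0 := Nat.cast_ne_zero.mpr hN.ne'
  have step1 : ∀ k ∈ Finset.range N,
      ((N : ℂ)⁻¹ * ∑ n ∈ Finset.range N, y n * ww N ^ ((k : ℤ) * (n : ℤ))) *
        (starRingEnd ℂ) ((N : ℂ)⁻¹ * ∑ n ∈ Finset.range N, y n * ww N ^ ((k : ℤ) * (n : ℤ)))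
      = (N : ℂ)⁻¹ * (N : ℂ)⁻¹ *
          ∑ n ∈ Finset.range N, ∑ m ∈ Finset.range N,
            y n * (starRingEnd ℂ) (y m) * ww N ^ ((k : ℤ) * ((n : ℤ) - (m : ℤ))) := by
    intro k _
    have hc : ∀ m ∈ Finset.range N, (starRingEnd ℂ) (y m * ww N ^ ((k:ℤ)*(m:ℤ)))
        = (starRingEnd ℂ) (y m) * ww N ^ (-((k:ℤ)*(m:ℤ))) := by
      intro m _; rw [map_mul, ww_conj]
    have hconj : (starRingEnd ℂ) ((N : ℂ)⁻¹ * ∑ n ∈ Finset.range N, y n * ww N ^ ((k:ℤ)*(n:ℤ)))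
        = (N:ℂ)⁻¹ * ∑ m ∈ Finset.range N, (starRingEnd ℂ) (y m) * ww N ^ (-((k:ℤ)*(m:ℤ))) := by
      rw [map_mul, map_sum, Finset.sum_congr rfl hc]
      congr 1
      simp
    rw [hconj, show ((N : ℂ)⁻¹ * ∑ n ∈ Finset.range N, y n * ww N ^ ((k:ℤ)*(n:ℤ))) *
        ((N:ℂ)⁻¹ * ∑ m ∈ Finset.range N, (starRingEnd ℂ) (y m) * ww N ^ (-((k:ℤ)*(m:ℤ))))
        = (N:ℂ)⁻¹ * (N:ℂ)⁻¹ * ((∑ n ∈ Finset.range N, y n * ww N ^ ((k:ℤ)*(n:ℤ))) *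
          (∑ m ∈ Finset.range N, (starRingEnd ℂ) (y m) * ww N ^ (-((k:ℤ)*(m:ℤ))))) from by ring,
      Finset.sum_mul_sum]
    congr 1
    refine Finset.sum_congr rfl fun n _ => Finset.sum_congr rfl fun m _ => ?_
    have he : ww N ^ ((k:ℤ)*(n:ℤ)) * ww N ^ (-((k:ℤ)*(m:ℤ)))
        = ww N ^ ((k : ℤ) * ((n : ℤ) - (m : ℤ))) := by
      rw [← zpow_add₀ (ww_ne_zero N)]; ring_nf
    rw [← he]; ring
  rw [Finset.sum_congr rfl step1, ← Finset.mul_sum, Finset.sum_comm]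
  have step2 : ∑ n ∈ Finset.range N, ∑ k ∈ Finset.range N, ∑ m ∈ Finset.range N,
        y n * (starRingEnd ℂ) (y m) * ww N ^ ((k : ℤ) * ((n : ℤ) - (m : ℤ)))
      = ∑ n ∈ Finset.range N, y n * (starRingEnd ℂ) (y n) * N := by
    refine Finset.sum_congr rfl fun n hn => ?_
    rw [Finset.sum_comm]
    have inner : ∀ m ∈ Finset.range N,
        ∑ k ∈ Finset.range N, y n * (starRingEnd ℂ) (y m) * ww N ^ ((k : ℤ) * ((n : ℤ) - (m : ℤ)))
        = y n * (starRingEnd ℂ) (y m) * (if (N:ℤ) ∣ ((n:ℤ)-(m:ℤ)) then (N:ℂ) else 0) := by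
      intro m _
      rw [← Finset.mul_sum, ortho N hN]
    rw [Finset.sum_congr rfl inner]
    rw [Finset.sum_eq_single_of_mem n hn]
    · rw [if_pos (by simp)]
    · intro m hm hne
      rw [if_neg, mul_zero]
      rw [dvd_iff_eq N n m (Finset.mem_range.mp hn) (Finset.mem_range.mp hm)]
      omega
  rw [step2, ← Finset.sum_mul]
  field_simp

lemma parseval_dft (N : ℕ) (hN : 0 < N) (x : ℤ → ℂ) :
    ∑ n ∈ Finset.range N,
      (∑ k ∈ Finset.range N, ww N ^ (-((k : ℤ) * (n : ℤ))) * x k) *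
        (starRingEnd ℂ) (∑ k ∈ Finset.range N, ww N ^ (-((k : ℤ) * (n : ℤ))) * x k)
      = (N : ℂ) * ∑ k ∈ Finset.range N, x k * (starRingEnd ℂ) (x k) := by
  have step1 : ∀ n ∈ Finset.range N,
      (∑ k ∈ Finset.range N, ww N ^ (-((k : ℤ) * (n : ℤ))) * x k) *
        (starRingEnd ℂ) (∑ k ∈ Finset.range N, ww N ^ (-((k : ℤ) * (n : ℤ))) * x k)
      = ∑ k ∈ Finset.range N, ∑ l ∈ Finset.range N,
          x k * (starRingEnd ℂ) (x l) * ww N ^ ((n : ℤ) * ((l : ℤ) - (k : ℤ))) := by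
    intro n _
    rw [map_sum]
    have hc : ∀ l ∈ Finset.range N, (starRingEnd ℂ) (ww N ^ (-((l:ℤ)*(n:ℤ))) * x l)
        = (starRingEnd ℂ) (x l) * ww N ^ ((l:ℤ)*(n:ℤ)) := by
      intro l _; rw [map_mul, ww_conj, neg_neg, mul_comm]
    rw [Finset.sum_congr rfl hc, Finset.sum_mul_sum]
    refine Finset.sum_congr rfl fun k _ => Finset.sum_congr rfl fun l _ => ?_
    have he : ww N ^ (-((k:ℤ)*(n:ℤ))) * ww N ^ ((l:ℤ)*(n:ℤ))
        = ww N ^ ((n : ℤ) * ((l : ℤ) - (k : ℤ))) := by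
      rw [← zpow_add₀ (ww_ne_zero N)]; ring_nf
    rw [← he]; ring
  rw [Finset.sum_congr rfl step1, Finset.sum_comm]
  have step2 : ∀ k ∈ Finset.range N,
      ∑ n ∈ Finset.range N, ∑ l ∈ Finset.range N,
          x k * (starRingEnd ℂ) (x l) * ww N ^ ((n : ℤ) * ((l : ℤ) - (k : ℤ)))
      = (N : ℂ) * (x k * (starRingEnd ℂ) (x k)) := by
    intro k hk
    rw [Finset.sum_comm]
    have inner : ∀ l ∈ Finset.range N,
        ∑ n ∈ Finset.range N, x k * (starRingEnd ℂ) (x l) * ww N ^ ((n : ℤ) * ((l : ℤ) - (k : ℤ)))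
        = x k * (starRingEnd ℂ) (x l) * (if (N:ℤ) ∣ ((l:ℤ)-(k:ℤ)) then (N:ℂ) else 0) := by
      intro l _
      rw [← Finset.mul_sum, ortho N hN]
    rw [Finset.sum_congr rfl inner]
    rw [Finset.sum_eq_single_of_mem k hk]
    · rw [if_pos (by simp)]; ring
    · intro l hl hne
      rw [if_neg, mul_zero]
      rw [dvd_iff_eq N l k (Finset.mem_range.mp hl) (Finset.mem_range.mp hk)]
      omega
  rw [Finset.sum_congr rfl step2, ← Finset.mul_sum]


/-- If x̂[0] = x̂[N/2] = 0 then ‖H(x)‖ = ‖x‖. -/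
theorem hilbert_norm_preserving (N : ℕ) (hN : 0 < N) (hNe : Even N) (x : ℤ → ℂ)
    (hper : ∀ k : ℤ, x (k + N) = x k)
    (h0 : dft N x 0 = 0) (h2 : dft N x ((N : ℤ) / 2) = 0) :
    Real.sqrt (∑ k ∈ Finset.range N, ‖hilbertT N x k‖ ^ 2)
      = Real.sqrt (∑ k ∈ Finset.range N, ‖x k‖ ^ 2) := by
  have hN0 : (N : ℂ) ≠ 0 := Nat.cast_ne_zero.mpr hN.ne'
  set c : ℕ → ℂ := fun n =>
    if 0 < n ∧ n < N / 2 then -Complex.I else if N / 2 < n ∧ n < N then Complex.I else 0 with hc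
  set y : ℕ → ℂ := fun n => c n * dft N x n with hy
  have hH : ∀ k : ℕ, hilbertT N x (k : ℤ)
      = (N : ℂ)⁻¹ * ∑ n ∈ Finset.range N, y n * ww N ^ ((k : ℤ) * (n : ℤ)) := by
    intro k; rfl
  have hyy : ∀ n ∈ Finset.range N,
      y n * (starRingEnd ℂ) (y n) = dft N x n * (starRingEnd ℂ) (dft N x n) := by
    intro n hn
    have hnN := Finset.mem_range.mp hn
    by_cases h00 : n = 0
    · subst h00
      simp [hy, hc, h0]
    by_cases hh : n = N / 2
    · subst hh
      have hcast : ((N / 2 : ℕ) : ℤ) = (N : ℤ) / 2 := by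
        omega
      rw [hy]
      simp only [hcast, h2]
      simp
    · have hcc : c n * (starRingEnd ℂ) (c n) = 1 := by
        rcases lt_or_gt_of_ne (fun h : n = N / 2 => hh h) with hlt | hgt
        · have : c n = -Complex.I := by
            simp [hc, hlt, Nat.pos_of_ne_zero h00]
          rw [this]; simp [Complex.conj_I]
        · have : c n = Complex.I := by
            show (if 0 < n ∧ n < N / 2 then -Complex.I
              else if N / 2 < n ∧ n < N then Complex.I else 0) = Complex.I
            rw [if_neg (by omega), if_pos ⟨hgt, hnN⟩]
          rw [this]; simp [Complex.conj_I]
      rw [hy]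
      simp only [map_mul]
      calc c n * dft N x ↑n * ((starRingEnd ℂ) (c n) * (starRingEnd ℂ) (dft N x ↑n))
          = (c n * (starRingEnd ℂ) (c n)) * (dft N x ↑n * (starRingEnd ℂ) (dft N x ↑n)) := by ring
        _ = dft N x ↑n * (starRingEnd ℂ) (dft N x ↑n) := by rw [hcc, one_mul]
  have key : ∑ k ∈ Finset.range N, hilbertT N x k * (starRingEnd ℂ) (hilbertT N x k)
      = ∑ k ∈ Finset.range N, x k * (starRingEnd ℂ) (x k) := by
    calc ∑ k ∈ Finset.range N, hilbertT N x k * (starRingEnd ℂ) (hilbertT N x k)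
        = ∑ k ∈ Finset.range N,
            ((N : ℂ)⁻¹ * ∑ n ∈ Finset.range N, y n * ww N ^ ((k : ℤ) * (n : ℤ))) *
              (starRingEnd ℂ)
                ((N : ℂ)⁻¹ * ∑ n ∈ Finset.range N, y n * ww N ^ ((k : ℤ) * (n : ℤ))) := by
          exact Finset.sum_congr rfl fun k _ => by rw [hH k]
      _ = (N : ℂ)⁻¹ * ∑ n ∈ Finset.range N, y n * (starRingEnd ℂ) (y n) :=
          sum_norm_inv N hN y
      _ = (N : ℂ)⁻¹ * ∑ n ∈ Finset.range N, dft N x n * (starRingEnd ℂ) (dft N x n) := by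
          rw [Finset.sum_congr rfl hyy]
      _ = (N : ℂ)⁻¹ * ((N : ℂ) * ∑ k ∈ Finset.range N, x k * (starRingEnd ℂ) (x k)) := by
          rw [show (∑ n ∈ Finset.range N, dft N x n * (starRingEnd ℂ) (dft N x n))
              = (N : ℂ) * ∑ k ∈ Finset.range N, x k * (starRingEnd ℂ) (x k) from
            parseval_dft N hN x]
      _ = ∑ k ∈ Finset.range N, x k * (starRingEnd ℂ) (x k) := by
          field_simp
  have hmc : ∀ z : ℂ, z * (starRingEnd ℂ) z = ((‖z‖ ^ 2 : ℝ) : ℂ) := by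
    intro z
    rw [Complex.mul_conj]
    norm_cast
    rw [Complex.normSq_eq_norm_sq]
  simp only [hmc] at key
  congr 1
  have : ((∑ k ∈ Finset.range N, ‖hilbertT N x k‖ ^ 2 : ℝ) : ℂ)
      = ((∑ k ∈ Finset.range N, ‖x k‖ ^ 2 : ℝ) : ℂ) := by
    exact_mod_cast key
  exact_mod_cast this

end WP
end
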